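/- Let A and B be random variables taking values in finite sets with joint probability mass function p, let c > 0 be real and n a positive integer. If I(A;B) ≤ c, then Pr( p_{A,B}(A,B) > p_A(A)·p_B(B)·2^{nc} ) ≤ 1/n + 1/(nc). -/

import Mathlib

open scoped BigOperators Classical

noncomputable section

private lemma key_bound {p q : ℝ} (hp : 0 < p) (hq : 0 < q) :
    p * Real.logb 2 (q / p) ≤ q := by
  have he : (0:ℝ) < Real.exp 1 := Real.exp_pos 1
  have h2e : (2:ℝ) < Real.exp 1 := by
    have := Real.exp_one_gt_d9; linarith
  have hlog2 : (1 : ℝ) / Real.exp 1 < Real.log 2 := by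
    have h2 : (0.6931471803 : ℝ) < Real.log 2 := Real.log_two_gt_d9
    have h1 : (1:ℝ)/Real.exp 1 < 1/2 := by
      rw [div_lt_div_iff₀ he two_pos]; linarith
    linarith
  have h3 : Real.log (q / p) ≤ q / (p * Real.exp 1) := by
    have hz : 0 < q / (p * Real.exp 1) := by positivity
    have hle := Real.log_le_sub_one_of_pos hz
    have heq : Real.log (q / p) = Real.log (q / (p * Real.exp 1)) + 1 := by
      rw [div_mul_eq_div_div, Real.log_div (by positivity) (ne_of_gt he),
        Real.log_exp]
      ring
    linarith
  have h4 : p * Real.log (q / p) ≤ q / Real.exp 1 := by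
    calc p * Real.log (q/p) ≤ p * (q / (p * Real.exp 1)) :=
          mul_le_mul_of_nonneg_left h3 hp.le
      _ = q / Real.exp 1 := by field_simp
  have h5 : q / Real.exp 1 ≤ q * Real.log 2 := by
    rw [div_eq_mul_inv]
    refine mul_le_mul_of_nonneg_left ?_ hq.le
    rw [inv_eq_one_div]; exact hlog2.le
  have heqb : p * Real.logb 2 (q/p) = p * Real.log (q/p) / Real.log 2 := by
    rw [Real.logb]; ring
  rw [heqb, div_le_iff₀ (Real.log_pos one_lt_two)]
  nlinarith [Real.log_pos (show (1:ℝ) < 2 by norm_num)]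

private lemma main_aux {ι : Type} [Fintype ι] (p q : ι → ℝ)
    (hp0 : ∀ x, 0 ≤ p x) (hq0 : ∀ x, 0 ≤ q x) (hqsum : ∑ x, q x = 1)
    (hpq : ∀ x, 0 < p x → 0 < q x)
    (t c : ℝ) (ht : 0 < t)
    (hI : ∑ x, p x * Real.logb 2 (p x / q x) ≤ c) :
    (∑ x, if q x * (2:ℝ)^t < p x then p x else 0) ≤ (c+1)/t := by
  have key : ∀ x : ι,
      (if q x * (2:ℝ)^t < p x then t * p x else 0)
        ≤ p x * Real.logb 2 (p x / q x) + q x := by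
    intro x
    by_cases hS : q x * (2:ℝ)^t < p x
    · simp only [if_pos hS]
      have hpx : 0 < p x := lt_of_le_of_lt (mul_nonneg (hq0 x) (by positivity)) hS
      have hqx : 0 < q x := hpq x hpx
      have h2t : (2:ℝ)^t < p x / q x := by
        rw [lt_div_iff₀ hqx]
        nlinarith
      have hlt : t < Real.logb 2 (p x / q x) :=
        (Real.lt_logb_iff_rpow_lt one_lt_two (by positivity)).2 h2t
      nlinarith [hq0 x, mul_le_mul_of_nonneg_left hlt.le hpx.le]
    · simp only [if_neg hS]
      rcases eq_or_lt_of_le (hp0 x) with h0 | hpx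
      · rw [← h0]; simpa using hq0 x
      · have hqx := hpq x hpx
        have hk := key_bound hpx hqx
        have hinv : Real.logb 2 (p x / q x) = - Real.logb 2 (q x / p x) := by
          rw [← Real.logb_inv]
          congr 1
          field_simp
        rw [hinv]; nlinarith
  have hsum : t * (∑ x, if q x * (2:ℝ)^t < p x then p x else 0) ≤ c + 1 := by
    rw [Finset.mul_sum]
    calc ∑ x, t * (if q x * (2:ℝ)^t < p x then p x else 0)
        = ∑ x, (if q x * (2:ℝ)^t < p x then t * p x else 0) := by
          refine Finset.sum_congr rfl fun x _ => ?_
          split <;> simp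
      _ ≤ ∑ x, (p x * Real.logb 2 (p x / q x) + q x) :=
          Finset.sum_le_sum fun x _ => key x
      _ = (∑ x, p x * Real.logb 2 (p x / q x)) + ∑ x, q x :=
          Finset.sum_add_distrib
      _ ≤ c + 1 := by rw [hqsum]; linarith
  rw [le_div_iff₀ ht]
  linarith [hsum]

/-- Lemma `lem:lai_strat2`: if `A, B` are random variables on finite
sets with joint pmf `p` and mutual information `I(A;B) ≤ c` (base-2 logarithm,
summed over the support), `c > 0`, and `n` is a positive integer, then
`Pr(p_{A,B}(A,B) > p_A(A)·p_B(B)·2^{nc}) ≤ 1/n + 1/(nc)`. -/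
theorem statement9 {A B : Type} [Fintype A] [Fintype B]
    (p : A × B → ℝ) (hp0 : ∀ x, 0 ≤ p x) (hp1 : ∑ x, p x = 1)
    (c : ℝ) (hc : 0 < c) (n : ℕ) (hn : 0 < n)
    (hI : ∑ x : A × B,
        p x * Real.logb 2 (p x / ((∑ b, p (x.1, b)) * (∑ a, p (a, x.2)))) ≤ c) :
    (∑ x : A × B,
        if (∑ b, p (x.1, b)) * (∑ a, p (a, x.2)) * (2 : ℝ) ^ ((n : ℝ) * c) < p x
        then p x else 0)
      ≤ 1 / (n : ℝ) + 1 / ((n : ℝ) * c) := by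
  have hn' : (0:ℝ) < (n:ℝ) := by exact_mod_cast hn
  have ht : 0 < (n:ℝ) * c := mul_pos hn' hc
  set q : A × B → ℝ := fun x => (∑ b, p (x.1, b)) * (∑ a, p (a, x.2)) with hqdef
  have hq0 : ∀ x, 0 ≤ q x := fun x =>
    mul_nonneg (Finset.sum_nonneg fun b _ => hp0 _) (Finset.sum_nonneg fun a _ => hp0 _)
  have hqsum : ∑ x, q x = 1 := by
    have h1 : ∑ x : A × B, q x = (∑ a, ∑ b, p (a, b)) * (∑ b, ∑ a, p (a, b)) := by
      rw [Finset.sum_mul_sum]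
      rw [Fintype.sum_prod_type]
    rw [h1]
    have h2 : ∑ a, ∑ b, p (a, b) = 1 := by
      rw [← Fintype.sum_prod_type]; exact hp1
    have h3 : ∑ b, ∑ a, p (a, b) = 1 := by
      rw [Finset.sum_comm]; exact h2
    rw [h2, h3]; norm_num
  have hpq : ∀ x, 0 < p x → 0 < q x := by
    intro x hx
    have h1 : p x ≤ ∑ b, p (x.1, b) := by
      have := Finset.single_le_sum (f := fun b => p (x.1, b))
        (fun b _ => hp0 _) (Finset.mem_univ x.2)
      simpa using this
    have h2 : p x ≤ ∑ a, p (a, x.2) := by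
      have := Finset.single_le_sum (f := fun a => p (a, x.2))
        (fun a _ => hp0 _) (Finset.mem_univ x.1)
      simpa using this
    exact mul_pos (lt_of_lt_of_le hx h1) (lt_of_lt_of_le hx h2)
  have := main_aux p q hp0 hq0 hqsum hpq ((n:ℝ)*c) c ht hI
  calc (∑ x : A × B,
        if (∑ b, p (x.1, b)) * (∑ a, p (a, x.2)) * (2 : ℝ) ^ ((n : ℝ) * c) < p x
        then p x else 0) ≤ (c+1)/((n:ℝ)*c) := this
    _ = 1 / (n : ℝ) + 1 / ((n : ℝ) * c) := by
        field_simp
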